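/- arXiv:1007.4784 — 2 statements merged into one kernel-verified Lean document; each statement's English description precedes it below -/
import Mathlib

section
/- Let $S$ be a type (of colors), and let $\mathbb{T}_S$ be the set of finite rooted trees with vertices colored by $S$. For trees $t_1, t_2$, define $t_1 \rhd t_2 := \sum_{s} n(t_1,t_2,s)\, s$ in the free vector space $\T_S$ on $\mathbb{T}_S$, where $n(t_1,t_2,s)$ is the number of edges $e$ of $s$ such that removing $e$ leaves the subtree below $e$ (with root the lower end of $e$) isomorphic to $t_1$ as a colored rooted tree, and the component containing the root of $s$ isomorphic to $t_2$. Then $\rhd$ is a left pre-Lie structure on $\T_S$. -/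
/-- An `S`-colored rooted tree on the vertex set `Fin (n+1)`, given by a parent
function (with root `0`, and each non-root vertex's parent strictly smaller, which
makes the graph an acyclic rooted tree) together with a coloring of the vertices. -/
def PreTree (S : Type) (n : ℕ) : Type :=
  {pc : (Fin (n+1) → Fin (n+1)) × (Fin (n+1) → S) //
    pc.1 0 = 0 ∧ ∀ i, i ≠ 0 → pc.1 i < i}

instance (S : Type) (n : ℕ) [DecidableEq S] [Fintype S] : Fintype (PreTree S n) := by
  unfold PreTree; infer_instance

/-- `desc t v i` : `v` is an ancestor of `i` (or `i` itself), i.e. `i` lies in the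
subtree below `v`; equivalently, `i` is separated from the root when the edge above
`v` is cut. -/
def desc {S : Type} {n : ℕ} (t : PreTree S n) (v i : Fin (n+1)) : Prop :=
  ∃ k ∈ Finset.range (n+2), (t.1.1)^[k] i = v

instance {S : Type} {n : ℕ} (t : PreTree S n) (v i : Fin (n+1)) :
    Decidable (desc t v i) := by unfold desc; infer_instance

/-- `IsoBelow a t v` : the subtree `P_e(t)` of `t` hanging below the edge `e` above
`v` is isomorphic to `a` as an `S`-colored rooted tree. -/
def IsoBelow {S : Type} {p m : ℕ} (a : PreTree S p) (t : PreTree S m)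
    (v : Fin (m+1)) : Prop :=
  ∃ f : Fin (p+1) → Fin (m+1),
    Function.Injective f ∧ f 0 = v ∧
    (∀ j, desc t v j ↔ ∃ i, f i = j) ∧
    (∀ i, i ≠ 0 → t.1.1 (f i) = f (a.1.1 i)) ∧
    (∀ i, t.1.2 (f i) = a.1.2 i)

instance {S : Type} [DecidableEq S] {p m : ℕ} (a : PreTree S p) (t : PreTree S m)
    (v : Fin (m+1)) : Decidable (IsoBelow a t v) := by
  unfold IsoBelow; infer_instance

/-- `IsoAbove b t v` : the complementary component `R_e(t)` containing the root,
obtained by cutting the edge above `v`, is isomorphic to `b` as an `S`-colored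
rooted tree. -/
def IsoAbove {S : Type} {q m : ℕ} (b : PreTree S q) (t : PreTree S m)
    (v : Fin (m+1)) : Prop :=
  ∃ g : Fin (q+1) → Fin (m+1),
    Function.Injective g ∧ g 0 = 0 ∧
    (∀ j, ¬ desc t v j ↔ ∃ i, g i = j) ∧
    (∀ i, i ≠ 0 → t.1.1 (g i) = g (b.1.1 i)) ∧
    (∀ i, t.1.2 (g i) = b.1.2 i)

instance {S : Type} [DecidableEq S] {q m : ℕ} (b : PreTree S q) (t : PreTree S m)
    (v : Fin (m+1)) : Decidable (IsoAbove b t v) := by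
  unfold IsoAbove; infer_instance

/-- `graftCount a b t = n(a,b,t)`: the number of edges `e` of `t` (identified with
their lower endpoints, the non-root vertices) such that `P_e(t) ≅ a` and
`R_e(t) ≅ b` as `S`-colored rooted trees. -/
def graftCount {S : Type} [DecidableEq S] {p q m : ℕ}
    (a : PreTree S p) (b : PreTree S q) (t : PreTree S m) : ℕ :=
  (Finset.univ.filter fun v : Fin (m+1) =>
    v ≠ 0 ∧ IsoBelow a t v ∧ IsoAbove b t v).card

/-- Isomorphism of `S`-colored rooted trees on the same vertex set. -/
def treeRel {S : Type} {n : ℕ} (t t' : PreTree S n) : Prop :=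
  ∃ e : Fin (n+1) ≃ Fin (n+1),
    e 0 = 0 ∧ (∀ i, i ≠ 0 → t'.1.1 (e i) = e (t.1.1 i)) ∧
    (∀ i, t'.1.2 (e i) = t.1.2 i)

/-- Isomorphism classes of `S`-colored rooted trees with `n+1` vertices. -/
def TClass (S : Type) [Fintype S] [DecidableEq S] (n : ℕ) : Type :=
  Quot (@treeRel S n)

noncomputable instance (S : Type) [Fintype S] [DecidableEq S] (n : ℕ) :
    Fintype (TClass S n) :=
  letI : DecidableEq (TClass S n) := Classical.decEq _
  Fintype.ofSurjective (Quot.mk _) (fun q => Quot.exists_rep q)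

open scoped BigOperators


section
variable {S : Type} {n m : ℕ}

lemma parent_root (t : PreTree S n) : t.1.1 0 = 0 := t.2.1

lemma parent_lt (t : PreTree S n) {i : Fin (n+1)} (h : i ≠ 0) : t.1.1 i < i := t.2.2 i h

lemma parent_le (t : PreTree S n) (i : Fin (n+1)) : t.1.1 i ≤ i := by
  rcases eq_or_ne i 0 with h | h
  · simp [h, t.2.1]
  · exact (parent_lt t h).le

lemma iter_parent_fix (t : PreTree S n) (k : ℕ) : (t.1.1)^[k] 0 = 0 :=
  Function.iterate_fixed t.2.1 k

lemma iter_parent_le (t : PreTree S n) (k : ℕ) (i : Fin (n+1)) : (t.1.1)^[k] i ≤ i := by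
  induction k with
  | zero => simp
  | succ k ih =>
    rw [Function.iterate_succ_apply']
    exact le_trans (parent_le t _) ih

lemma iter_parent_zero (t : PreTree S n) (i : Fin (n+1)) : (t.1.1)^[n+1] i = 0 := by
  have key : ∀ k : ℕ, ((t.1.1)^[k] i : ℕ) + k ≤ (i : ℕ) ∨ (t.1.1)^[k] i = 0 := by
    intro k
    induction k with
    | zero => left; simp
    | succ k ih =>
      rcases ih with h | h
      · rcases eq_or_ne ((t.1.1)^[k] i) 0 with h0 | h0
        · right; rw [Function.iterate_succ_apply', h0, t.2.1]
        · left
          rw [Function.iterate_succ_apply']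
          have := parent_lt t h0
          omega
      · right; rw [Function.iterate_succ_apply', h, t.2.1]
  rcases key (n+1) with h | h
  · have := i.isLt; omega
  · exact h

lemma desc_iff (t : PreTree S n) (v i : Fin (n+1)) :
    desc t v i ↔ ∃ k : ℕ, (t.1.1)^[k] i = v := by
  constructor
  · rintro ⟨k, -, hk⟩; exact ⟨k, hk⟩
  · rintro ⟨k, hk⟩
    rcases le_or_gt k (n+1) with h | h
    · exact ⟨k, Finset.mem_range.2 (by omega), hk⟩
    · refine ⟨n+1, Finset.mem_range.2 (by omega), ?_⟩
      rw [iter_parent_zero]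
      rw [show k = (k - (n+1)) + (n+1) by omega, Function.iterate_add_apply,
        iter_parent_zero, iter_parent_fix] at hk
      exact hk

lemma desc_refl (t : PreTree S n) (v : Fin (n+1)) : desc t v v :=
  (desc_iff t v v).2 ⟨0, rfl⟩

lemma desc_zero (t : PreTree S n) (i : Fin (n+1)) : desc t 0 i :=
  (desc_iff t 0 i).2 ⟨n+1, iter_parent_zero t i⟩

lemma desc_trans (t : PreTree S n) {u v i : Fin (n+1)} (h1 : desc t v i) (h2 : desc t u v) :
    desc t u i := by
  rw [desc_iff] at *
  obtain ⟨k1, hk1⟩ := h1; obtain ⟨k2, hk2⟩ := h2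
  exact ⟨k2 + k1, by rw [Function.iterate_add_apply, hk1, hk2]⟩

lemma le_of_desc (t : PreTree S n) {v i : Fin (n+1)} (h : desc t v i) : v ≤ i := by
  rw [desc_iff] at h; obtain ⟨k, hk⟩ := h; rw [← hk]; exact iter_parent_le t k i

lemma desc_antisymm (t : PreTree S n) {v w : Fin (n+1)} (h1 : desc t v w) (h2 : desc t w v) :
    v = w :=
  le_antisymm (le_of_desc t h1) (le_of_desc t h2)

lemma desc_parent (t : PreTree S n) {v i : Fin (n+1)} (h : desc t v i) (hne : i ≠ v) :
    desc t v (t.1.1 i) := by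
  rw [desc_iff] at *
  obtain ⟨k, hk⟩ := h
  match k, hk with
  | 0, hk => exact absurd hk hne
  | (k+1), hk => exact ⟨k, by rw [← hk, Function.iterate_succ_apply]⟩

lemma parent_desc (t : PreTree S n) {v i : Fin (n+1)} (h : desc t v (t.1.1 i)) :
    desc t v i := by
  rw [desc_iff] at *
  obtain ⟨k, hk⟩ := h
  exact ⟨k+1, by rw [Function.iterate_succ_apply, hk]⟩

lemma desc_total (t : PreTree S n) {v w j : Fin (n+1)} (h1 : desc t v j) (h2 : desc t w j) :
    desc t v w ∨ desc t w v := by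
  rw [desc_iff] at h1 h2
  obtain ⟨k1, hk1⟩ := h1; obtain ⟨k2, hk2⟩ := h2
  rcases le_or_gt k1 k2 with h | h
  · right
    refine (desc_iff t w v).2 ⟨k2 - k1, ?_⟩
    rw [← hk1, ← Function.iterate_add_apply, show k2 - k1 + k1 = k2 by omega, hk2]
  · left
    refine (desc_iff t v w).2 ⟨k1 - k2, ?_⟩
    rw [← hk2, ← Function.iterate_add_apply, show k1 - k2 + k2 = k1 by omega, hk1]

lemma pos_of_desc (t : PreTree S n) {v i : Fin (n+1)} (hv : v ≠ 0) (h : desc t v i) : i ≠ 0 := by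
  intro h0
  have := le_of_desc t h
  rw [h0, Fin.le_zero_iff] at this
  exact hv this

end
section
variable {S : Type} {n m : ℕ}

lemma above_iter (t : PreTree S n) (s : PreTree S m)
    (g : Fin (n+1) → Fin (m+1)) (hg0 : g 0 = 0)
    (hp : ∀ i, i ≠ 0 → s.1.1 (g i) = g (t.1.1 i)) :
    ∀ (k : ℕ) (j : Fin (n+1)), (s.1.1)^[k] (g j) = g ((t.1.1)^[k] j) := by
  have hp' : ∀ i, s.1.1 (g i) = g (t.1.1 i) := by
    intro i
    rcases eq_or_ne i 0 with h | h
    · rw [h, hg0, s.2.1, t.2.1, hg0]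
    · exact hp i h
  intro k
  induction k with
  | zero => simp
  | succ k ih =>
    intro j
    rw [Function.iterate_succ_apply', Function.iterate_succ_apply', ih, hp']

lemma desc_map_above (t : PreTree S n) (s : PreTree S m)
    (g : Fin (n+1) → Fin (m+1)) (hginj : Function.Injective g) (hg0 : g 0 = 0)
    (hp : ∀ i, i ≠ 0 → s.1.1 (g i) = g (t.1.1 i))
    (u j : Fin (n+1)) :
    desc t u j ↔ desc s (g u) (g j) := by
  rw [desc_iff, desc_iff]
  constructor
  · rintro ⟨k, hk⟩
    exact ⟨k, by rw [above_iter t s g hg0 hp, hk]⟩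
  · rintro ⟨k, hk⟩
    rw [above_iter t s g hg0 hp] at hk
    exact ⟨k, hginj hk⟩

lemma desc_map_below (t : PreTree S n) (s : PreTree S m) {v : Fin (m+1)}
    (f : Fin (n+1) → Fin (m+1)) (hfinj : Function.Injective f) (hf0 : f 0 = v)
    (him : ∀ j, desc s v j ↔ ∃ i, f i = j)
    (hp : ∀ i, i ≠ 0 → s.1.1 (f i) = f (t.1.1 i))
    {u : Fin (n+1)} (hu : u ≠ 0) (j : Fin (n+1)) :
    desc t u j ↔ desc s (f u) (f j) := by
  constructor
  · intro h
    obtain ⟨k, hk⟩ := (desc_iff t u j).1 h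
    clear h
    induction k generalizing j with
    | zero => simp only [Function.iterate_zero, id] at hk; rw [hk]; exact desc_refl s _
    | succ k ih =>
      have hj0 : j ≠ 0 := by
        rintro rfl
        rw [iter_parent_fix] at hk
        exact hu hk.symm
      rw [Function.iterate_succ_apply] at hk
      have := ih (t.1.1 j) hk
      rw [← hp j hj0] at this
      exact parent_desc s this
  · intro h
    obtain ⟨k, hk⟩ := (desc_iff s (f u) (f j)).1 h
    clear h
    induction k generalizing j with
    | zero =>
      simp only [Function.iterate_zero, id] at hk
      rw [hfinj hk]; exact desc_refl t _
    | succ k ih =>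
      rcases eq_or_ne j u with rfl | hju
      · exact desc_refl t _
      have hj0 : j ≠ 0 := by
        rintro rfl
        rw [hf0] at hk
        have h1 : desc s (f u) v := (desc_iff s (f u) v).2 ⟨k+1, hk⟩
        have h2 : desc s v (f u) := (him (f u)).2 ⟨u, rfl⟩
        have : f u = v := desc_antisymm s h1 h2
        rw [← hf0] at this
        exact hu (hfinj this)
      rw [Function.iterate_succ_apply, hp j hj0] at hk
      exact parent_desc t (ih (t.1.1 j) hk)

lemma desc_below_mem (s : PreTree S m) {v : Fin (m+1)} {n : ℕ}
    (f : Fin (n+1) → Fin (m+1))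
    (him : ∀ j, desc s v j ↔ ∃ i, f i = j)
    {u : Fin (n+1)} {j : Fin (m+1)} (h : desc s (f u) j) : ∃ i, f i = j := by
  rw [← him]
  exact desc_trans s h ((him (f u)).2 ⟨u, rfl⟩)

end
/-- The middle part: cutting `s` at `w` and then at `v` (with `v` below `w`),
the part of the subtree below `w` not below `v`, rooted at `w`, is `≅ b`. -/
def Mid {S : Type} {q m : ℕ} (b : PreTree S q) (s : PreTree S m)
    (v w : Fin (m+1)) : Prop :=
  ∃ f : Fin (q+1) → Fin (m+1),
    Function.Injective f ∧ f 0 = w ∧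
    (∀ j, (desc s w j ∧ ¬ desc s v j) ↔ ∃ i, f i = j) ∧
    (∀ i, i ≠ 0 → s.1.1 (f i) = f (b.1.1 i)) ∧
    (∀ i, s.1.2 (f i) = b.1.2 i)

instance {S : Type} [DecidableEq S] {q m : ℕ} (b : PreTree S q) (s : PreTree S m)
    (v w : Fin (m+1)) : Decidable (Mid b s v w) := by
  unfold Mid; infer_instance

/-- The outer part: the complement of the subtrees below `v` and `w`, rooted at the
root, is `≅ c`. -/
def Out {S : Type} {r m : ℕ} (c : PreTree S r) (s : PreTree S m)
    (v w : Fin (m+1)) : Prop :=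
  ∃ g : Fin (r+1) → Fin (m+1),
    Function.Injective g ∧ g 0 = 0 ∧
    (∀ j, (¬ desc s v j ∧ ¬ desc s w j) ↔ ∃ i, g i = j) ∧
    (∀ i, i ≠ 0 → s.1.1 (g i) = g (c.1.1 i)) ∧
    (∀ i, s.1.2 (g i) = c.1.2 i)

instance {S : Type} [DecidableEq S] {r m : ℕ} (c : PreTree S r) (s : PreTree S m)
    (v w : Fin (m+1)) : Decidable (Out c s v w) := by
  unfold Out; infer_instance

section
variable {S : Type} [DecidableEq S] {m : ℕ}

lemma countA {p q K : ℕ} (a : PreTree S p) (b : PreTree S q)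
    (s : PreTree S m) {w : Fin (m+1)} (hw : w ≠ 0)
    {T : PreTree S K} (hT : IsoBelow T s w) :
    graftCount a b T = (Finset.univ.filter fun v : Fin (m+1) =>
      v ≠ 0 ∧ desc s w v ∧ v ≠ w ∧ IsoBelow a s v ∧ Mid b s v w).card := by
  classical
  obtain ⟨f, hfinj, hf0, hfim, hfp, hfc⟩ := hT
  have hdm : ∀ {u : Fin (K+1)}, u ≠ 0 → ∀ j, desc T u j ↔ desc s (f u) (f j) :=
    fun hu j => desc_map_below T s f hfinj hf0 hfim hfp hu j
  refine Finset.card_bij (fun u _ => f u) ?_ ?_ ?_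
  · -- membership
    intro u hu
    simp only [graftCount, Finset.mem_filter, Finset.mem_univ, true_and] at hu ⊢
    obtain ⟨hu0, ⟨fa, hainj, ha0, haim, hap, hac⟩, ⟨gb, hbinj, hb0, hbim, hbp, hbc⟩⟩ := hu
    have hdw : desc s w (f u) := (hfim (f u)).2 ⟨u, rfl⟩
    refine ⟨pos_of_desc s hw hdw, hdw, ?_, ?_, ?_⟩
    · intro h; exact hu0 (hfinj (h.trans hf0.symm))
    · -- IsoBelow a s (f u)
      refine ⟨fun i => f (fa i), hfinj.comp hainj, by simp only [ha0], ?_, ?_, ?_⟩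
      · intro j
        constructor
        · intro h
          obtain ⟨j', rfl⟩ := desc_below_mem s f hfim h
          obtain ⟨i, hi⟩ := (haim j').1 ((hdm hu0 j').2 h)
          exact ⟨i, by simp only [hi]⟩
        · rintro ⟨i, rfl⟩
          exact (hdm hu0 (fa i)).1 ((haim (fa i)).2 ⟨i, rfl⟩)
      · intro i hi
        have hfa0 : fa i ≠ 0 := pos_of_desc T hu0 ((haim (fa i)).2 ⟨i, rfl⟩)
        rw [hfp _ hfa0, hap i hi]
      · intro i; rw [hfc, hac]
    · -- Mid b s (f u) w
      refine ⟨fun i => f (gb i), hfinj.comp hbinj, by simp only [hb0, hf0], ?_, ?_, ?_⟩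
      · intro j
        constructor
        · rintro ⟨h1, h2⟩
          obtain ⟨j', rfl⟩ := (hfim j).1 h1
          obtain ⟨i, hi⟩ := (hbim j').1 (fun h => h2 ((hdm hu0 j').1 h))
          exact ⟨i, by simp only [hi]⟩
        · rintro ⟨i, rfl⟩
          exact ⟨(hfim _).2 ⟨gb i, rfl⟩,
            fun h => ((hbim (gb i)).2 ⟨i, rfl⟩) ((hdm hu0 (gb i)).2 h)⟩
      · intro i hi
        have hgb0 : gb i ≠ 0 := fun h => hi (hbinj (h.trans hb0.symm))
        rw [hfp _ hgb0, hbp i hi]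
      · intro i; rw [hfc, hbc]
  · -- injectivity
    intro u1 _ u2 _ h
    exact hfinj h
  · -- surjectivity
    intro v hv
    simp only [Finset.mem_filter, Finset.mem_univ, true_and] at hv
    obtain ⟨hv0, hdwv, hvw, ⟨fa, hainj, ha0, haim, hap, hac⟩,
      ⟨fm, hminj, hm0, hmim, hmp, hmc⟩⟩ := hv
    obtain ⟨u, hu⟩ := (hfim v).1 hdwv
    have hu0 : u ≠ 0 := by rintro rfl; rw [hf0] at hu; exact hvw hu.symm
    have hdm' : ∀ j, desc T u j ↔ desc s v (f j) := by
      intro j; rw [hdm hu0 j, hu]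
    have hmem_a : ∀ i, ∃ i', f i' = fa i := fun i =>
      (hfim (fa i)).1 (desc_trans s ((haim (fa i)).2 ⟨i, rfl⟩) hdwv)
    have hmem_m : ∀ i, ∃ i', f i' = fm i := fun i =>
      (hfim (fm i)).1 ((hmim (fm i)).2 ⟨i, rfl⟩).1
    refine ⟨u, ?_, hu⟩
    simp only [graftCount, Finset.mem_filter, Finset.mem_univ, true_and]
    set fa' : Fin (p+1) → Fin (K+1) := fun i => Function.invFun f (fa i) with hfa'
    set fm' : Fin (q+1) → Fin (K+1) := fun i => Function.invFun f (fm i) with hfm'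
    have hva : ∀ i, f (fa' i) = fa i := fun i => Function.invFun_eq (hmem_a i)
    have hvm : ∀ i, f (fm' i) = fm i := fun i => Function.invFun_eq (hmem_m i)
    have hainj' : Function.Injective fa' := fun i1 i2 h => by
      apply hainj; rw [← hva i1, ← hva i2, h]
    have hminj' : Function.Injective fm' := fun i1 i2 h => by
      apply hminj; rw [← hvm i1, ← hvm i2, h]
    refine ⟨hu0, ⟨fa', hainj', ?_, ?_, ?_, ?_⟩, ⟨fm', hminj', ?_, ?_, ?_, ?_⟩⟩
    · apply hfinj; rw [hva 0, ha0, hu]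
    · intro j
      rw [hdm' j]
      constructor
      · intro h
        obtain ⟨i, hi⟩ := (haim (f j)).1 h
        exact ⟨i, hfinj (by rw [hva, hi])⟩
      · rintro ⟨i, rfl⟩
        rw [hva]
        exact (haim (fa i)).2 ⟨i, rfl⟩
    · intro i hi
      have hne : fa' i ≠ 0 := by
        intro h
        have h1 : fa i = w := by rw [← hva i, h, hf0]
        have hdv : desc s v (fa i) := (haim (fa i)).2 ⟨i, rfl⟩
        rw [h1] at hdv
        exact hvw (desc_antisymm s hdwv hdv).symm
      apply hfinj
      rw [← hfp _ hne, hva, hap i hi, hva]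
    · intro i
      rw [← hfc, hva, hac]
    · apply hfinj; rw [hvm 0, hm0, hf0]
    · intro j
      have hwj : desc s w (f j) := (hfim (f j)).2 ⟨j, rfl⟩
      constructor
      · intro h
        rw [hdm' j] at h
        obtain ⟨i, hi⟩ := (hmim (f j)).1 ⟨hwj, h⟩
        exact ⟨i, hfinj (by rw [hvm, hi])⟩
      · rintro ⟨i, rfl⟩
        rw [hdm', hvm]
        exact ((hmim (fm i)).2 ⟨i, rfl⟩).2
    · intro i hi
      have hne : fm' i ≠ 0 := by
        intro h
        have h1 : fm i = fm 0 := by rw [← hvm i, h, hf0, hm0]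
        exact hi (hminj h1)
      apply hfinj
      rw [← hfp _ hne, hvm, hmp i hi, hvm]
    · intro i
      rw [← hfc, hvm, hmc]

lemma countB {q r K : ℕ} (b : PreTree S q) (c : PreTree S r)
    (s : PreTree S m) {v : Fin (m+1)} (_hv : v ≠ 0)
    {T : PreTree S K} (hT : IsoAbove T s v) :
    graftCount b c T = (Finset.univ.filter fun w : Fin (m+1) =>
      w ≠ 0 ∧ ¬ desc s v w ∧ Mid b s v w ∧ Out c s v w).card := by
  classical
  obtain ⟨g, hginj, hg0, hgim, hgp, hgc⟩ := hT
  have hdm : ∀ (u j : Fin (K+1)), desc T u j ↔ desc s (g u) (g j) :=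
    desc_map_above T s g hginj hg0 hgp
  have hgp' : ∀ i, s.1.1 (g i) = g (T.1.1 i) := by
    intro i
    rcases eq_or_ne i 0 with rfl | h
    · rw [hg0, s.2.1, T.2.1, hg0]
    · exact hgp i h
  refine Finset.card_bij (fun u _ => g u) ?_ ?_ ?_
  · intro u hu
    simp only [graftCount, Finset.mem_filter, Finset.mem_univ, true_and] at hu ⊢
    obtain ⟨hu0, ⟨fb, hbinj, hb0, hbim, hbp, hbc⟩, ⟨gc, hcinj, hc0, hcim, hcp, hcc⟩⟩ := hu
    refine ⟨fun h => hu0 (hginj (h.trans hg0.symm)), (hgim (g u)).2 ⟨u, rfl⟩, ?_, ?_⟩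
    · -- Mid b s v (g u)
      refine ⟨fun i => g (fb i), hginj.comp hbinj, by simp only [hb0], ?_, ?_, ?_⟩
      · intro j
        constructor
        · rintro ⟨h1, h2⟩
          obtain ⟨j', rfl⟩ := (hgim j).1 h2
          obtain ⟨i, hi⟩ := (hbim j').1 ((hdm u j').2 h1)
          exact ⟨i, by simp only [hi]⟩
        · rintro ⟨i, rfl⟩
          exact ⟨(hdm u (fb i)).1 ((hbim (fb i)).2 ⟨i, rfl⟩), (hgim _).2 ⟨fb i, rfl⟩⟩
      · intro i hi
        rw [hgp', hbp i hi]
      · intro i; rw [hgc, hbc]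
    · -- Out c s v (g u)
      refine ⟨fun i => g (gc i), hginj.comp hcinj, by simp only [hc0, hg0], ?_, ?_, ?_⟩
      · intro j
        constructor
        · rintro ⟨h1, h2⟩
          obtain ⟨j', rfl⟩ := (hgim j).1 h1
          obtain ⟨i, hi⟩ := (hcim j').1 (fun h => h2 ((hdm u j').1 h))
          exact ⟨i, by simp only [hi]⟩
        · rintro ⟨i, rfl⟩
          exact ⟨(hgim _).2 ⟨gc i, rfl⟩,
            fun h => ((hcim (gc i)).2 ⟨i, rfl⟩) ((hdm u (gc i)).2 h)⟩
      · intro i hi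
        rw [hgp', hcp i hi]
      · intro i; rw [hgc, hcc]
  · intro u1 _ u2 _ h
    exact hginj h
  · intro w hw
    simp only [Finset.mem_filter, Finset.mem_univ, true_and] at hw
    obtain ⟨hw0, hnvw, ⟨fm, hminj, hm0, hmim, hmp, hmc⟩,
      ⟨fo, hoinj, ho0, hoim, hop, hoc⟩⟩ := hw
    obtain ⟨u, hu⟩ := (hgim w).1 hnvw
    have hu0 : u ≠ 0 := by rintro rfl; rw [hg0] at hu; exact hw0 hu.symm
    have hdm' : ∀ j, desc T u j ↔ desc s w (g j) := by
      intro j; rw [hdm u j, hu]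
    have hmem_m : ∀ i, ∃ i', g i' = fm i := fun i =>
      (hgim (fm i)).1 ((hmim (fm i)).2 ⟨i, rfl⟩).2
    have hmem_o : ∀ i, ∃ i', g i' = fo i := fun i =>
      (hgim (fo i)).1 ((hoim (fo i)).2 ⟨i, rfl⟩).1
    refine ⟨u, ?_, hu⟩
    simp only [graftCount, Finset.mem_filter, Finset.mem_univ, true_and]
    set fm' : Fin (q+1) → Fin (K+1) := fun i => Function.invFun g (fm i) with hfm'
    set fo' : Fin (r+1) → Fin (K+1) := fun i => Function.invFun g (fo i) with hfo'
    have hvm : ∀ i, g (fm' i) = fm i := fun i => Function.invFun_eq (hmem_m i)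
    have hvo : ∀ i, g (fo' i) = fo i := fun i => Function.invFun_eq (hmem_o i)
    have hminj' : Function.Injective fm' := fun i1 i2 h => by
      apply hminj; rw [← hvm i1, ← hvm i2, h]
    have hoinj' : Function.Injective fo' := fun i1 i2 h => by
      apply hoinj; rw [← hvo i1, ← hvo i2, h]
    have hnv : ∀ j, ¬ desc s v (g j) := fun j => (hgim (g j)).2 ⟨j, rfl⟩
    refine ⟨hu0, ⟨fm', hminj', ?_, ?_, ?_, ?_⟩, ⟨fo', hoinj', ?_, ?_, ?_, ?_⟩⟩
    · apply hginj; rw [hvm 0, hm0, hu]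
    · intro j
      rw [hdm' j]
      constructor
      · intro h
        obtain ⟨i, hi⟩ := (hmim (g j)).1 ⟨h, hnv j⟩
        exact ⟨i, hginj (by rw [hvm, hi])⟩
      · rintro ⟨i, rfl⟩
        rw [hvm]
        exact ((hmim (fm i)).2 ⟨i, rfl⟩).1
    · intro i hi
      apply hginj
      rw [← hgp', hvm, hmp i hi, hvm]
    · intro i
      rw [← hgc, hvm, hmc]
    · apply hginj; rw [hvo 0, ho0, hg0]
    · intro j
      rw [hdm' j]
      constructor
      · intro h
        obtain ⟨i, hi⟩ := (hoim (g j)).1 ⟨hnv j, h⟩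
        exact ⟨i, hginj (by rw [hvo, hi])⟩
      · rintro ⟨i, rfl⟩
        rw [hvo]
        exact ((hoim (fo i)).2 ⟨i, rfl⟩).2
    · intro i hi
      apply hginj
      rw [← hgp', hvo, hop i hi, hvo]
    · intro i
      rw [← hgc, hvo, hoc]

end
section
variable {S : Type} {m N : ℕ}

lemma treeRel_equiv : Equivalence (@treeRel S N) := by
  constructor
  · intro t
    exact ⟨Equiv.refl _, rfl, fun i _ => rfl, fun i => rfl⟩
  · rintro t t' ⟨e, he0, hep, hec⟩
    have hs0 : e.symm 0 = 0 := by apply e.injective; rw [Equiv.apply_symm_apply, he0]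
    refine ⟨e.symm, hs0, ?_, ?_⟩
    · intro i hi
      have hsi : e.symm i ≠ 0 := fun h => hi (by rw [← he0, ← h, Equiv.apply_symm_apply])
      have := hep (e.symm i) hsi
      rw [Equiv.apply_symm_apply] at this
      rw [this, Equiv.symm_apply_apply]
    · intro i
      have := hec (e.symm i)
      rw [Equiv.apply_symm_apply] at this
      exact this.symm
  · rintro t t' t'' ⟨e1, h10, h1p, h1c⟩ ⟨e2, h20, h2p, h2c⟩
    refine ⟨e1.trans e2, by rw [Equiv.trans_apply, h10, h20], ?_, ?_⟩
    · intro i hi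
      have h1i : e1 i ≠ 0 := fun h => hi (by
        have := congrArg e1.symm h
        rwa [Equiv.symm_apply_apply, ← h10, Equiv.symm_apply_apply] at this)
      simp only [Equiv.trans_apply]
      rw [h2p (e1 i) h1i, h1p i hi]
    · intro i
      simp only [Equiv.trans_apply]
      rw [h2c, h1c]

lemma isoBelow_congr {s : PreTree S m} {w : Fin (m+1)} {T₁ T₂ : PreTree S N}
    (hrel : treeRel T₁ T₂) (h : IsoBelow T₁ s w) : IsoBelow T₂ s w := by
  obtain ⟨e, he0, hep, hec⟩ := hrel
  obtain ⟨f, hfinj, hf0, hfim, hfp, hfc⟩ := h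
  have hs0 : e.symm 0 = 0 := by apply e.injective; rw [Equiv.apply_symm_apply, he0]
  refine ⟨fun i => f (e.symm i), hfinj.comp e.symm.injective, by show f (e.symm 0) = _; rw [hs0, hf0], ?_, ?_, ?_⟩
  · intro j
    rw [hfim j]
    constructor
    · rintro ⟨i, rfl⟩; exact ⟨e i, by simp⟩
    · rintro ⟨i, rfl⟩; exact ⟨e.symm i, rfl⟩
  · intro i hi
    have hsi : e.symm i ≠ 0 := fun h => hi (by rw [← he0, ← h, Equiv.apply_symm_apply])
    rw [hfp _ hsi]
    congr 1
    have := hep (e.symm i) hsi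
    rw [Equiv.apply_symm_apply] at this
    rw [this, Equiv.symm_apply_apply]
  · intro i
    rw [hfc]
    have := hec (e.symm i)
    rw [Equiv.apply_symm_apply] at this
    exact this.symm

lemma isoAbove_congr {s : PreTree S m} {w : Fin (m+1)} {T₁ T₂ : PreTree S N}
    (hrel : treeRel T₁ T₂) (h : IsoAbove T₁ s w) : IsoAbove T₂ s w := by
  obtain ⟨e, he0, hep, hec⟩ := hrel
  obtain ⟨f, hfinj, hf0, hfim, hfp, hfc⟩ := h
  have hs0 : e.symm 0 = 0 := by apply e.injective; rw [Equiv.apply_symm_apply, he0]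
  refine ⟨fun i => f (e.symm i), hfinj.comp e.symm.injective, by show f (e.symm 0) = _; rw [hs0, hf0], ?_, ?_, ?_⟩
  · intro j
    rw [hfim j]
    constructor
    · rintro ⟨i, rfl⟩; exact ⟨e i, by simp⟩
    · rintro ⟨i, rfl⟩; exact ⟨e.symm i, rfl⟩
  · intro i hi
    have hsi : e.symm i ≠ 0 := fun h => hi (by rw [← he0, ← h, Equiv.apply_symm_apply])
    rw [hfp _ hsi]
    congr 1
    have := hep (e.symm i) hsi
    rw [Equiv.apply_symm_apply] at this
    rw [this, Equiv.symm_apply_apply]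
  · intro i
    rw [hfc]
    have := hec (e.symm i)
    rw [Equiv.apply_symm_apply] at this
    exact this.symm

lemma isoBelow_unique {s : PreTree S m} {w : Fin (m+1)} {T₁ T₂ : PreTree S N}
    (h1 : IsoBelow T₁ s w) (h2 : IsoBelow T₂ s w) : treeRel T₁ T₂ := by
  classical
  obtain ⟨f1, h1inj, h10, h1im, h1p, h1c⟩ := h1
  obtain ⟨f2, h2inj, h20, h2im, h2p, h2c⟩ := h2
  have hmem : ∀ i, ∃ i', f2 i' = f1 i := fun i => (h2im (f1 i)).1 ((h1im (f1 i)).2 ⟨i, rfl⟩)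
  set e0 : Fin (N+1) → Fin (N+1) := fun i => Function.invFun f2 (f1 i) with he0def
  have hval : ∀ i, f2 (e0 i) = f1 i := fun i => Function.invFun_eq (hmem i)
  have hinj : Function.Injective e0 := fun i1 i2 h => h1inj (by rw [← hval i1, ← hval i2, h])
  have hbij := Finite.injective_iff_bijective.1 hinj
  refine ⟨Equiv.ofBijective e0 hbij, ?_, ?_, ?_⟩
  · apply h2inj
    show f2 (e0 0) = f2 0
    rw [hval 0, h10, h20]
  · intro i hi
    show (T₂.1.1) (e0 i) = e0 ((T₁.1.1) i)
    have hei : e0 i ≠ 0 := by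
      intro h
      apply hi
      apply h1inj
      rw [← hval i, h, h20, h10]
    apply h2inj
    rw [← h2p _ hei, hval i, h1p i hi, hval]
  · intro i
    show (T₂.1.2) (e0 i) = (T₁.1.2) i
    rw [← h2c (e0 i), hval i, h1c]

lemma isoAbove_unique {s : PreTree S m} {w : Fin (m+1)} {T₁ T₂ : PreTree S N}
    (h1 : IsoAbove T₁ s w) (h2 : IsoAbove T₂ s w) : treeRel T₁ T₂ := by
  classical
  obtain ⟨f1, h1inj, h10, h1im, h1p, h1c⟩ := h1
  obtain ⟨f2, h2inj, h20, h2im, h2p, h2c⟩ := h2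
  have hmem : ∀ i, ∃ i', f2 i' = f1 i := fun i => (h2im (f1 i)).1 ((h1im (f1 i)).2 ⟨i, rfl⟩)
  set e0 : Fin (N+1) → Fin (N+1) := fun i => Function.invFun f2 (f1 i) with he0def
  have hval : ∀ i, f2 (e0 i) = f1 i := fun i => Function.invFun_eq (hmem i)
  have hinj : Function.Injective e0 := fun i1 i2 h => h1inj (by rw [← hval i1, ← hval i2, h])
  have hbij := Finite.injective_iff_bijective.1 hinj
  refine ⟨Equiv.ofBijective e0 hbij, ?_, ?_, ?_⟩
  · apply h2inj
    show f2 (e0 0) = f2 0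
    rw [hval 0, h10, h20]
  · intro i hi
    show (T₂.1.1) (e0 i) = e0 ((T₁.1.1) i)
    have hei : e0 i ≠ 0 := by
      intro h
      apply hi
      apply h1inj
      rw [← hval i, h, h20, h10]
    apply h2inj
    rw [← h2p _ hei, hval i, h1p i hi, hval]
  · intro i
    show (T₂.1.2) (e0 i) = (T₁.1.2) i
    rw [← h2c (e0 i), hval i, h1c]

/-- The subtree of `s` on a parent-closed vertex set `D` (rooted at `min D`). -/
def subTree (s : PreTree S m) (D : Finset (Fin (m+1)))
    (hcard : D.card = N+1) : PreTree S N :=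
  letI e := D.orderIsoOfFin hcard
  ⟨(fun i => if h : (s.1.1 (e i) : Fin (m+1)) ∈ D ∧ i ≠ 0 then e.symm ⟨s.1.1 (e i), h.1⟩
      else 0,
    fun i => s.1.2 (e i)),
   by
    constructor
    · simp
    · intro i hi
      by_cases h : (s.1.1 (e i) : Fin (m+1)) ∈ D ∧ i ≠ 0
      · simp only [dif_pos h]
        have h1 : (e 0 : Fin (m+1)) < e i := by
          have := (D.orderIsoOfFin hcard).strictMono (show (0 : Fin (N+1)) < i by
            exact Fin.pos_of_ne_zero hi)
          exact this
        have h2 : (e i : Fin (m+1)) ≠ 0 := by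
          intro h0
          have := Fin.zero_le (e 0 : Fin (m+1))
          rw [← h0] at this
          exact absurd h1 (by omega)
        have h3 : (⟨s.1.1 (e i), h.1⟩ : {x // x ∈ D}) < e i := by
          have := parent_lt s h2
          exact Subtype.mk_lt_mk.2 this
        have := (D.orderIsoOfFin hcard).symm.strictMono h3
        rw [OrderIso.symm_apply_apply] at this
        exact this
      · simp only [dif_neg h]
        exact Fin.pos_of_ne_zero hi⟩

lemma subTree_spec (s : PreTree S m) (D : Finset (Fin (m+1)))
    (hcard : D.card = N+1)
    (hcl : ∀ j ∈ D, j ≠ D.min' (Finset.card_pos.1 (by omega)) → s.1.1 j ∈ D) :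
    ∃ f : Fin (N+1) → Fin (m+1),
      Function.Injective f ∧ f 0 = D.min' (Finset.card_pos.1 (by omega)) ∧
      (∀ j, j ∈ D ↔ ∃ i, f i = j) ∧
      (∀ i, i ≠ 0 → s.1.1 (f i) = f ((subTree s D hcard).1.1 i)) ∧
      (∀ i, s.1.2 (f i) = (subTree s D hcard).1.2 i) := by
  classical
  set hne : D.Nonempty := Finset.card_pos.1 (by omega)
  set e := D.orderIsoOfFin hcard with he
  refine ⟨fun i => (e i : Fin (m+1)), ?_, ?_, ?_, ?_, ?_⟩
  · intro i1 i2 h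
    exact e.injective (Subtype.ext h)
  · -- f 0 = min'
    apply le_antisymm
    · apply D.le_min' hne
      intro y hy
      obtain ⟨i0, hi0⟩ := e.surjective ⟨y, hy⟩
      have h1 : (e 0 : Fin (m+1)) ≤ (e i0 : Fin (m+1)) := e.monotone (Fin.zero_le i0)
      rw [hi0] at h1
      exact h1
    · exact D.min'_le _ (e 0).2
  · intro j
    constructor
    · intro hj
      obtain ⟨i, hi⟩ := e.surjective ⟨j, hj⟩
      exact ⟨i, congrArg Subtype.val hi⟩
    · rintro ⟨i, rfl⟩
      exact (e i).2
  · intro i hi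
    have h0i : (e 0 : Fin (m+1)) < e i := e.strictMono (Fin.pos_of_ne_zero hi)
    have hemin : (e 0 : Fin (m+1)) = D.min' hne := by
      apply le_antisymm
      · apply D.le_min' hne
        intro y hy
        obtain ⟨i0, hi0⟩ := e.surjective ⟨y, hy⟩
        have h1 : (e 0 : Fin (m+1)) ≤ (e i0 : Fin (m+1)) := e.monotone (Fin.zero_le i0)
        rw [hi0] at h1
        exact h1
      · exact D.min'_le _ (e 0).2
    have hmem : (s.1.1 (e i) : Fin (m+1)) ∈ D := by
      apply hcl _ (e i).2
      rw [← hemin]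
      omega
    show (s.1.1 (e i) : Fin (m+1)) = (e ((subTree s D hcard).1.1 i) : Fin (m+1))
    have : (subTree s D hcard).1.1 i = e.symm ⟨s.1.1 (e i), hmem⟩ := by
      show (if h : (s.1.1 (e i) : Fin (m+1)) ∈ D ∧ i ≠ 0 then e.symm ⟨s.1.1 (e i), h.1⟩
        else 0) = _
      rw [dif_pos ⟨hmem, hi⟩]
    rw [this, OrderIso.apply_symm_apply]
  · intro i
    rfl

lemma exists_isoBelow (s : PreTree S m) {w : Fin (m+1)} (hw : w ≠ 0)
    (hcard : (Finset.univ.filter fun j => desc s w j).card = N+1) :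
    ∃ T : PreTree S N, IsoBelow T s w := by
  classical
  set D := Finset.univ.filter fun j => desc s w j with hD
  have hwD : w ∈ D := by simp [hD, desc_refl]
  have hne : D.Nonempty := Finset.card_pos.1 (by omega)
  have hmin : D.min' hne = w := by
    apply le_antisymm (D.min'_le _ hwD)
    apply D.le_min' hne
    intro y hy
    rw [hD, Finset.mem_filter] at hy
    exact le_of_desc s hy.2
  have hcl : ∀ j ∈ D, j ≠ D.min' hne → s.1.1 j ∈ D := by
    intro j hj hjne
    rw [hD, Finset.mem_filter] at hj ⊢
    rw [hmin] at hjne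
    exact ⟨Finset.mem_univ _, desc_parent s hj.2 hjne⟩
  obtain ⟨f, hfinj, hf0, hfim, hfp, hfc⟩ := subTree_spec s D hcard hcl
  refine ⟨subTree s D hcard, f, hfinj, by rw [hf0, hmin], ?_, hfp, hfc⟩
  intro j
  rw [← hfim j]
  simp [hD]

lemma exists_isoAbove (s : PreTree S m) {v : Fin (m+1)} (hv : v ≠ 0)
    (hcard : (Finset.univ.filter fun j => ¬ desc s v j).card = N+1) :
    ∃ T : PreTree S N, IsoAbove T s v := by
  classical
  set D := Finset.univ.filter fun j => ¬ desc s v j with hD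
  have h0D : (0 : Fin (m+1)) ∈ D := by
    simp only [hD, Finset.mem_filter, Finset.mem_univ, true_and]
    intro h
    exact pos_of_desc s hv h rfl
  have hne : D.Nonempty := ⟨0, h0D⟩
  have hne' : D.Nonempty := Finset.card_pos.1 (by omega)
  have hmin : D.min' hne' = 0 := by
    apply le_antisymm (D.min'_le _ h0D) (Fin.zero_le _)
  have hcl : ∀ j ∈ D, j ≠ D.min' hne' → s.1.1 j ∈ D := by
    intro j hj _
    rw [hD, Finset.mem_filter] at hj ⊢
    exact ⟨Finset.mem_univ _, fun h => hj.2 (parent_desc s h)⟩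
  obtain ⟨f, hfinj, hf0, hfim, hfp, hfc⟩ := subTree_spec s D hcard hcl
  refine ⟨subTree s D hcard, f, hfinj, by rw [hf0, hmin], ?_, hfp, hfc⟩
  intro j
  rw [← hfim j]
  simp [hD]

lemma card_of_witness {k : ℕ} (f : Fin (k+1) → Fin (m+1)) (hf : Function.Injective f)
    (P : Fin (m+1) → Prop) [DecidablePred P]
    (him : ∀ j, P j ↔ ∃ i, f i = j) :
    (Finset.univ.filter fun j => P j).card = k+1 := by
  classical
  have : (Finset.univ.filter fun j => P j) = Finset.univ.image f := by
    ext j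
    simp only [Finset.mem_filter, Finset.mem_univ, true_and, Finset.mem_image, him j]
  rw [this, Finset.card_image_of_injective _ hf, Finset.card_univ, Fintype.card_fin]

end
section
variable {S : Type} [DecidableEq S] {m : ℕ}

lemma glue_congr {k : ℕ} {t : PreTree S k} {s : PreTree S m} {root : Fin (m+1)}
    {P Q : Fin (m+1) → Prop} (hPQ : ∀ j, P j ↔ Q j)
    (h : ∃ f : Fin (k+1) → Fin (m+1), Function.Injective f ∧ f 0 = root ∧
      (∀ j, P j ↔ ∃ i, f i = j) ∧ (∀ i, i ≠ 0 → s.1.1 (f i) = f (t.1.1 i)) ∧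
      (∀ i, s.1.2 (f i) = t.1.2 i)) :
    ∃ f : Fin (k+1) → Fin (m+1), Function.Injective f ∧ f 0 = root ∧
      (∀ j, Q j ↔ ∃ i, f i = j) ∧ (∀ i, i ≠ 0 → s.1.1 (f i) = f (t.1.1 i)) ∧
      (∀ i, s.1.2 (f i) = t.1.2 i) := by
  obtain ⟨f, h1, h2, h3, h4, h5⟩ := h
  exact ⟨f, h1, h2, fun j => (hPQ j).symm.trans (h3 j), h4, h5⟩

lemma midIffBelow {q : ℕ} {b : PreTree S q} {s : PreTree S m} {v w : Fin (m+1)}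
    (hnvw : ¬ desc s v w) (hnwv : ¬ desc s w v) :
    Mid b s v w ↔ IsoBelow b s w := by
  have hPQ : ∀ j, (desc s w j ∧ ¬ desc s v j) ↔ desc s w j := by
    intro j
    constructor
    · exact fun h => h.1
    · intro h
      refine ⟨h, fun hv => ?_⟩
      rcases desc_total s hv h with h' | h'
      · exact hnvw h'
      · exact hnwv h'
  exact ⟨fun h => glue_congr hPQ h, fun h => glue_congr (fun j => (hPQ j).symm) h⟩

lemma outIffAbove {r : ℕ} {c : PreTree S r} {s : PreTree S m} {v w : Fin (m+1)}
    (hwv : desc s w v) :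
    Out c s v w ↔ IsoAbove c s w := by
  have hPQ : ∀ j, (¬ desc s v j ∧ ¬ desc s w j) ↔ ¬ desc s w j := by
    intro j
    constructor
    · exact fun h => h.2
    · exact fun h => ⟨fun hv => h (desc_trans s hv hwv), h⟩
  exact ⟨fun h => glue_congr hPQ h, fun h => glue_congr (fun j => (hPQ j).symm) h⟩

lemma out_comm {r : ℕ} {c : PreTree S r} {s : PreTree S m} {v w : Fin (m+1)} :
    Out c s v w ↔ Out c s w v := by
  have hPQ : ∀ j, (¬ desc s v j ∧ ¬ desc s w j) ↔ (¬ desc s w j ∧ ¬ desc s v j) :=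
    fun j => and_comm
  exact ⟨fun h => glue_congr hPQ h, fun h => glue_congr (fun j => (hPQ j).symm) h⟩

variable [Fintype S]

lemma keyA {p q K : ℕ} (a : PreTree S p) (b : PreTree S q)
    (s : PreTree S m) (w : Fin (m+1)) (hw : w ≠ 0) (hK : K = p + q + 1) :
    ∑ T : TClass S K, (if IsoBelow T.out s w then graftCount a b T.out else 0)
    = (Finset.univ.filter fun v : Fin (m+1) =>
        v ≠ 0 ∧ desc s w v ∧ v ≠ w ∧ IsoBelow a s v ∧ Mid b s v w).card := by
  classical
  by_cases hex : ∃ T₀ : PreTree S K, IsoBelow T₀ s w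
  · obtain ⟨T₀, hT₀⟩ := hex
    have h1 : Quot.mk treeRel ((Quot.mk (@treeRel S K) T₀).out) = Quot.mk treeRel T₀ :=
      Quot.out_eq _
    have hrel : treeRel T₀ ((Quot.mk (@treeRel S K) T₀).out) :=
      treeRel_equiv.symm ((Equivalence.eqvGen_iff treeRel_equiv).1 (Quot.eq.1 h1))
    have hTcB : IsoBelow ((Quot.mk (@treeRel S K) T₀).out) s w := isoBelow_congr hrel hT₀
    refine (Finset.sum_eq_single ((Quot.mk (@treeRel S K) T₀ : TClass S K)) ?_ ?_).trans ?_
    · intro T _ hne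
      rw [if_neg]
      intro hB
      apply hne
      have hrel2 : treeRel T.out T₀ := isoBelow_unique hB hT₀
      conv_lhs => rw [← Quot.out_eq T]
      exact Quot.sound hrel2
    · intro h; exact absurd (Finset.mem_univ (α := TClass S K) _) h
    · rw [if_pos hTcB]
      exact countA a b s hw hTcB
  · have hz : (∑ T : TClass S K, (if IsoBelow T.out s w then graftCount a b T.out else 0)) = 0 :=
      Finset.sum_eq_zero (fun T _ => if_neg (fun h => hex ⟨T.out, h⟩))
    rw [hz, eq_comm,
      Finset.card_eq_zero, Finset.eq_empty_iff_forall_notMem]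
    intro v hv
    rw [Finset.mem_filter] at hv
    obtain ⟨-, hv0, hwv, hvw, hBel, hMid⟩ := hv
    obtain ⟨fa, hainj, ha0, haim, hap, hac⟩ := hBel
    obtain ⟨fm, hminj, hm0, hmim, hmp, hmc⟩ := hMid
    have hc1 : (Finset.univ.filter fun j => desc s v j).card = p+1 :=
      card_of_witness fa hainj _ haim
    have hc2 : (Finset.univ.filter fun j => desc s w j ∧ ¬ desc s v j).card = q+1 :=
      card_of_witness fm hminj _ hmim
    have hsplit : (Finset.univ.filter fun j => desc s w j).card = K + 1 := by
      have h3 := Finset.card_filter_add_card_filter_not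
        (s := Finset.univ.filter fun j => desc s w j) (p := fun j => desc s v j)
      rw [Finset.filter_filter, Finset.filter_filter] at h3
      have e1 : (Finset.univ.filter fun j => desc s w j ∧ desc s v j)
          = Finset.univ.filter fun j => desc s v j := by
        ext j
        simp only [Finset.mem_filter, Finset.mem_univ, true_and, and_iff_right_iff_imp]
        intro h; exact desc_trans s h hwv
      have e2 : (Finset.univ.filter fun j => desc s w j ∧ ¬ desc s v j).card = q+1 := hc2
      rw [e1, hc1, e2] at h3
      omega
    obtain ⟨T₀, hT₀⟩ := exists_isoBelow s hw hsplit
    exact hex ⟨T₀, hT₀⟩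

lemma keyB {q r K : ℕ} (b : PreTree S q) (c : PreTree S r)
    (s : PreTree S m) (v : Fin (m+1)) (hv : v ≠ 0) (hK : K = q + r + 1) :
    ∑ T : TClass S K, (if IsoAbove T.out s v then graftCount b c T.out else 0)
    = (Finset.univ.filter fun w : Fin (m+1) =>
        w ≠ 0 ∧ ¬ desc s v w ∧ Mid b s v w ∧ Out c s v w).card := by
  classical
  by_cases hex : ∃ T₀ : PreTree S K, IsoAbove T₀ s v
  · obtain ⟨T₀, hT₀⟩ := hex
    have h1 : Quot.mk treeRel ((Quot.mk (@treeRel S K) T₀).out) = Quot.mk treeRel T₀ :=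
      Quot.out_eq _
    have hrel : treeRel T₀ ((Quot.mk (@treeRel S K) T₀).out) :=
      treeRel_equiv.symm ((Equivalence.eqvGen_iff treeRel_equiv).1 (Quot.eq.1 h1))
    have hTcB : IsoAbove ((Quot.mk (@treeRel S K) T₀).out) s v := isoAbove_congr hrel hT₀
    refine (Finset.sum_eq_single ((Quot.mk (@treeRel S K) T₀ : TClass S K)) ?_ ?_).trans ?_
    · intro T _ hne
      rw [if_neg]
      intro hB
      apply hne
      have hrel2 : treeRel T.out T₀ := isoAbove_unique hB hT₀
      conv_lhs => rw [← Quot.out_eq T]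
      exact Quot.sound hrel2
    · intro h; exact absurd (Finset.mem_univ (α := TClass S K) _) h
    · rw [if_pos hTcB]
      exact countB b c s hv hTcB
  · have hz : (∑ T : TClass S K, (if IsoAbove T.out s v then graftCount b c T.out else 0)) = 0 :=
      Finset.sum_eq_zero (fun T _ => if_neg (fun h => hex ⟨T.out, h⟩))
    rw [hz, eq_comm,
      Finset.card_eq_zero, Finset.eq_empty_iff_forall_notMem]
    intro w hw
    rw [Finset.mem_filter] at hw
    obtain ⟨-, hw0, hnvw, hMid, hOut⟩ := hw
    obtain ⟨fm, hminj, hm0, hmim, hmp, hmc⟩ := hMid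
    obtain ⟨fo, hoinj, ho0, hoim, hop, hoc⟩ := hOut
    have hc2 : (Finset.univ.filter fun j => desc s w j ∧ ¬ desc s v j).card = q+1 :=
      card_of_witness fm hminj _ hmim
    have hc3 : (Finset.univ.filter fun j => ¬ desc s v j ∧ ¬ desc s w j).card = r+1 :=
      card_of_witness fo hoinj _ hoim
    have hsplit : (Finset.univ.filter fun j => ¬ desc s v j).card = K + 1 := by
      have h3 := Finset.card_filter_add_card_filter_not
        (s := Finset.univ.filter fun j => ¬ desc s v j) (p := fun j => desc s w j)
      rw [Finset.filter_filter, Finset.filter_filter] at h3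
      have e1 : (Finset.univ.filter fun j => ¬ desc s v j ∧ desc s w j)
          = Finset.univ.filter fun j => desc s w j ∧ ¬ desc s v j := by
        ext j
        simp only [Finset.mem_filter, Finset.mem_univ, true_and]
        exact and_comm
      have e2 : (Finset.univ.filter fun j => ¬ desc s v j ∧ ¬ desc s w j).card = r+1 := hc3
      rw [e1, hc2, e2] at h3
      omega
    obtain ⟨T₀, hT₀⟩ := exists_isoAbove s hv hsplit
    exact hex ⟨T₀, hT₀⟩

end
section
variable {S : Type} [DecidableEq S] [Fintype S] {m : ℕ}

lemma sumA {p q r K : ℕ} (a : PreTree S p) (b : PreTree S q) (c : PreTree S r)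
    (s : PreTree S m) (hK : K = p + q + 1) :
    ∑ T : TClass S K, graftCount a b T.out * graftCount T.out c s
    = ∑ w : Fin (m+1), ∑ v : Fin (m+1),
        (if w ≠ 0 ∧ IsoAbove c s w ∧ v ≠ 0 ∧ desc s w v ∧ v ≠ w ∧ IsoBelow a s v ∧ Mid b s v w
         then 1 else 0) := by
  classical
  have step1 : ∀ T : TClass S K,
      graftCount a b T.out * graftCount T.out c s
        = ∑ w : Fin (m+1), (if w ≠ 0 ∧ IsoBelow T.out s w ∧ IsoAbove c s w
            then graftCount a b T.out else 0) := by
    intro T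
    have h0 : graftCount T.out c s = ∑ w : Fin (m+1),
        (if w ≠ 0 ∧ IsoBelow T.out s w ∧ IsoAbove c s w then 1 else 0) := by
      rw [graftCount, Finset.card_filter]
    rw [h0, Finset.mul_sum]
    refine Finset.sum_congr rfl (fun w _ => ?_)
    rw [mul_ite, mul_one, mul_zero]
  rw [Finset.sum_congr rfl (fun T _ => step1 T), Finset.sum_comm]
  refine Finset.sum_congr rfl (fun w _ => ?_)
  by_cases hw : w ≠ 0 ∧ IsoAbove c s w
  · have hL : (∑ T : TClass S K, if w ≠ 0 ∧ IsoBelow T.out s w ∧ IsoAbove c s w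
        then graftCount a b T.out else 0)
        = ∑ T : TClass S K, (if IsoBelow T.out s w then graftCount a b T.out else 0) := by
      refine Finset.sum_congr rfl (fun T _ => ?_)
      by_cases h : IsoBelow T.out s w
      · rw [if_pos h, if_pos ⟨hw.1, h, hw.2⟩]
      · rw [if_neg h, if_neg (fun hh => h hh.2.1)]
    rw [hL, keyA a b s w hw.1 hK, Finset.card_filter]
    refine Finset.sum_congr rfl (fun v _ => ?_)
    refine if_congr ?_ rfl rfl
    constructor
    · rintro ⟨h1, h2, h3, h4, h5⟩; exact ⟨hw.1, hw.2, h1, h2, h3, h4, h5⟩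
    · rintro ⟨_, _, h1, h2, h3, h4, h5⟩; exact ⟨h1, h2, h3, h4, h5⟩
  · have l1 : (∑ T : TClass S K, if w ≠ 0 ∧ IsoBelow T.out s w ∧ IsoAbove c s w
        then graftCount a b T.out else 0) = 0 :=
      Finset.sum_eq_zero (fun T _ => if_neg (fun hh => hw ⟨hh.1, hh.2.2⟩))
    have l2 : (∑ v : Fin (m+1),
        (if w ≠ 0 ∧ IsoAbove c s w ∧ v ≠ 0 ∧ desc s w v ∧ v ≠ w ∧ IsoBelow a s v ∧ Mid b s v w
         then 1 else 0)) = 0 :=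
      Finset.sum_eq_zero (fun v _ => if_neg (fun hh => hw ⟨hh.1, hh.2.1⟩))
    rw [l1, l2]

lemma sumB {p q r K : ℕ} (a : PreTree S p) (b : PreTree S q) (c : PreTree S r)
    (s : PreTree S m) (hK : K = q + r + 1) :
    ∑ T : TClass S K, graftCount b c T.out * graftCount a T.out s
    = ∑ v : Fin (m+1), ∑ w : Fin (m+1),
        (if v ≠ 0 ∧ IsoBelow a s v ∧ w ≠ 0 ∧ ¬ desc s v w ∧ Mid b s v w ∧ Out c s v w
         then 1 else 0) := by
  classical
  have step1 : ∀ T : TClass S K,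
      graftCount b c T.out * graftCount a T.out s
        = ∑ v : Fin (m+1), (if v ≠ 0 ∧ IsoBelow a s v ∧ IsoAbove T.out s v
            then graftCount b c T.out else 0) := by
    intro T
    have h0 : graftCount a T.out s = ∑ v : Fin (m+1),
        (if v ≠ 0 ∧ IsoBelow a s v ∧ IsoAbove T.out s v then 1 else 0) := by
      rw [graftCount, Finset.card_filter]
    rw [h0, Finset.mul_sum]
    refine Finset.sum_congr rfl (fun v _ => ?_)
    rw [mul_ite, mul_one, mul_zero]
  rw [Finset.sum_congr rfl (fun T _ => step1 T), Finset.sum_comm]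
  refine Finset.sum_congr rfl (fun v _ => ?_)
  by_cases hv : v ≠ 0 ∧ IsoBelow a s v
  · have hL : (∑ T : TClass S K, if v ≠ 0 ∧ IsoBelow a s v ∧ IsoAbove T.out s v
        then graftCount b c T.out else 0)
        = ∑ T : TClass S K, (if IsoAbove T.out s v then graftCount b c T.out else 0) := by
      refine Finset.sum_congr rfl (fun T _ => ?_)
      by_cases h : IsoAbove T.out s v
      · rw [if_pos h, if_pos ⟨hv.1, hv.2, h⟩]
      · rw [if_neg h, if_neg (fun hh => h hh.2.2)]
    rw [hL, keyB b c s v hv.1 hK, Finset.card_filter]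
    refine Finset.sum_congr rfl (fun w _ => ?_)
    refine if_congr ?_ rfl rfl
    constructor
    · rintro ⟨h1, h2, h3, h4⟩; exact ⟨hv.1, hv.2, h1, h2, h3, h4⟩
    · rintro ⟨_, _, h1, h2, h3, h4⟩; exact ⟨h1, h2, h3, h4⟩
  · have l1 : (∑ T : TClass S K, if v ≠ 0 ∧ IsoBelow a s v ∧ IsoAbove T.out s v
        then graftCount b c T.out else 0) = 0 :=
      Finset.sum_eq_zero (fun T _ => if_neg (fun hh => hv ⟨hh.1, hh.2.1⟩))
    have l2 : (∑ w : Fin (m+1),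
        (if v ≠ 0 ∧ IsoBelow a s v ∧ w ≠ 0 ∧ ¬ desc s v w ∧ Mid b s v w ∧ Out c s v w
         then 1 else 0)) = 0 :=
      Finset.sum_eq_zero (fun w _ => if_neg (fun hh => hv ⟨hh.1, hh.2.1⟩))
    rw [l1, l2]

lemma split_pred {p q r : ℕ} (a : PreTree S p) (b : PreTree S q) (c : PreTree S r)
    (s : PreTree S m) (v w : Fin (m+1)) :
    ((if v ≠ 0 ∧ IsoBelow a s v ∧ w ≠ 0 ∧ ¬ desc s v w ∧ Mid b s v w ∧ Out c s v w
      then 1 else 0) : ℕ)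
    = (if w ≠ 0 ∧ IsoAbove c s w ∧ v ≠ 0 ∧ desc s w v ∧ v ≠ w ∧ IsoBelow a s v ∧ Mid b s v w
       then 1 else 0)
      + (if v ≠ 0 ∧ w ≠ 0 ∧ ¬ desc s v w ∧ ¬ desc s w v ∧ IsoBelow a s v ∧ IsoBelow b s w
            ∧ Out c s v w
         then 1 else 0) := by
  by_cases hwv : desc s w v
  · rw [if_neg (show ¬(v ≠ 0 ∧ w ≠ 0 ∧ ¬ desc s v w ∧ ¬ desc s w v ∧ IsoBelow a s v
      ∧ IsoBelow b s w ∧ Out c s v w) from fun hh => hh.2.2.2.1 hwv), add_zero]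
    refine if_congr ?_ rfl rfl
    constructor
    · rintro ⟨hv0, hBa, hw0, hnvw, hMid, hOut⟩
      have hvw : v ≠ w := fun h => hnvw (h ▸ desc_refl s v)
      exact ⟨hw0, (outIffAbove hwv).1 hOut, hv0, hwv, hvw, hBa, hMid⟩
    · rintro ⟨hw0, hAb, hv0, _, hvw, hBa, hMid⟩
      refine ⟨hv0, hBa, hw0, ?_, hMid, (outIffAbove hwv).2 hAb⟩
      intro hdvw
      exact hvw (desc_antisymm s hdvw hwv)
  · rw [if_neg (show ¬(w ≠ 0 ∧ IsoAbove c s w ∧ v ≠ 0 ∧ desc s w v ∧ v ≠ w ∧ IsoBelow a s v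
      ∧ Mid b s v w) from fun hh => hwv hh.2.2.2.1), zero_add]
    refine if_congr ?_ rfl rfl
    constructor
    · rintro ⟨hv0, hBa, hw0, hnvw, hMid, hOut⟩
      exact ⟨hv0, hw0, hnvw, hwv, hBa, (midIffBelow hnvw hwv).1 hMid, hOut⟩
    · rintro ⟨hv0, hw0, hnvw, _, hBa, hBb, hOut⟩
      exact ⟨hv0, hBa, hw0, hnvw, (midIffBelow hnvw hwv).2 hBb, hOut⟩

lemma dswap_pred {p q r : ℕ} (a : PreTree S p) (b : PreTree S q) (c : PreTree S r)
    (s : PreTree S m) (v w : Fin (m+1)) :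
    ((if v ≠ 0 ∧ w ≠ 0 ∧ ¬ desc s v w ∧ ¬ desc s w v ∧ IsoBelow a s v ∧ IsoBelow b s w
        ∧ Out c s v w then 1 else 0) : ℕ)
    = (if w ≠ 0 ∧ v ≠ 0 ∧ ¬ desc s w v ∧ ¬ desc s v w ∧ IsoBelow b s w ∧ IsoBelow a s v
        ∧ Out c s w v then 1 else 0) := by
  refine if_congr ?_ rfl rfl
  constructor
  · rintro ⟨h1, h2, h3, h4, h5, h6, h7⟩
    exact ⟨h2, h1, h4, h3, h6, h5, out_comm.1 h7⟩
  · rintro ⟨h1, h2, h3, h4, h5, h6, h7⟩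
    exact ⟨h2, h1, h4, h3, h6, h5, out_comm.2 h7⟩

end

/-- The grafting product `t₁ ▷ t₂ = ∑_s n(t₁,t₂,s) s` on the free vector
space on isomorphism classes of `S`-colored rooted trees, where `n(t₁,t₂,s)` counts
edges `e` of `s` with lower subtree `P_e(s) ≅ t₁` and root component `R_e(s) ≅ t₂`,
is a left pre-Lie structure.  Stated coefficientwise: for all trees `a, b, c` and
every tree `s`, the coefficient of (the class of) `s` in
`(a ▷ b) ▷ c - a ▷ (b ▷ c)` equals that in `(b ▷ a) ▷ c - b ▷ (a ▷ c)`, where e.g.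
the coefficient of `s` in `(a ▷ b) ▷ c` is `∑_{[T]} n(a,b,T) n(T,c,s)`, the sum
running over isomorphism classes `[T]` of trees with `|a| + |b|` vertices. -/
theorem stmt7 (S : Type) [Fintype S] [DecidableEq S] {p q r m : ℕ}
    (a : PreTree S p) (b : PreTree S q) (c : PreTree S r) (s : PreTree S m) :
    ((∑ T : TClass S (p + q + 1), (graftCount a b T.out * graftCount T.out c s : ℤ))
      - ∑ T : TClass S (q + r + 1), (graftCount b c T.out * graftCount a T.out s : ℤ))
    =
    ((∑ T : TClass S (p + q + 1), (graftCount b a T.out * graftCount T.out c s : ℤ))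
      - ∑ T : TClass S (p + r + 1), (graftCount a c T.out * graftCount b T.out s : ℤ)) := by
  classical
  have e1 : (∑ T : TClass S (p + q + 1), (graftCount a b T.out * graftCount T.out c s : ℤ))
      = ((∑ T : TClass S (p + q + 1), graftCount a b T.out * graftCount T.out c s : ℕ) : ℤ) := by
    push_cast; rfl
  have e2 : (∑ T : TClass S (q + r + 1), (graftCount b c T.out * graftCount a T.out s : ℤ))
      = ((∑ T : TClass S (q + r + 1), graftCount b c T.out * graftCount a T.out s : ℕ) : ℤ) := by
    push_cast; rfl
  have e3 : (∑ T : TClass S (p + q + 1), (graftCount b a T.out * graftCount T.out c s : ℤ))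
      = ((∑ T : TClass S (p + q + 1), graftCount b a T.out * graftCount T.out c s : ℕ) : ℤ) := by
    push_cast; rfl
  have e4 : (∑ T : TClass S (p + r + 1), (graftCount a c T.out * graftCount b T.out s : ℤ))
      = ((∑ T : TClass S (p + r + 1), graftCount a c T.out * graftCount b T.out s : ℕ) : ℤ) := by
    push_cast; rfl
  rw [e1, e2, e3, e4, sumA a b c s rfl, sumB a b c s rfl,
    sumA b a c s (by omega), sumB b a c s rfl]
  have hsplit1 : (∑ v : Fin (m+1), ∑ w : Fin (m+1),
        (if v ≠ 0 ∧ IsoBelow a s v ∧ w ≠ 0 ∧ ¬ desc s v w ∧ Mid b s v w ∧ Out c s v w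
         then 1 else 0))
      = (∑ v : Fin (m+1), ∑ w : Fin (m+1),
          (if w ≠ 0 ∧ IsoAbove c s w ∧ v ≠ 0 ∧ desc s w v ∧ v ≠ w ∧ IsoBelow a s v
              ∧ Mid b s v w then 1 else 0))
        + (∑ v : Fin (m+1), ∑ w : Fin (m+1),
            (if v ≠ 0 ∧ w ≠ 0 ∧ ¬ desc s v w ∧ ¬ desc s w v ∧ IsoBelow a s v ∧ IsoBelow b s w
                ∧ Out c s v w then 1 else 0)) := by
    rw [← Finset.sum_add_distrib]
    refine Finset.sum_congr rfl (fun v _ => ?_)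
    rw [← Finset.sum_add_distrib]
    exact Finset.sum_congr rfl (fun w _ => split_pred a b c s v w)
  have hsplit2 : (∑ v : Fin (m+1), ∑ w : Fin (m+1),
        (if v ≠ 0 ∧ IsoBelow b s v ∧ w ≠ 0 ∧ ¬ desc s v w ∧ Mid a s v w ∧ Out c s v w
         then 1 else 0))
      = (∑ v : Fin (m+1), ∑ w : Fin (m+1),
          (if w ≠ 0 ∧ IsoAbove c s w ∧ v ≠ 0 ∧ desc s w v ∧ v ≠ w ∧ IsoBelow b s v
              ∧ Mid a s v w then 1 else 0))
        + (∑ v : Fin (m+1), ∑ w : Fin (m+1),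
            (if v ≠ 0 ∧ w ≠ 0 ∧ ¬ desc s v w ∧ ¬ desc s w v ∧ IsoBelow b s v ∧ IsoBelow a s w
                ∧ Out c s v w then 1 else 0)) := by
    rw [← Finset.sum_add_distrib]
    refine Finset.sum_congr rfl (fun v _ => ?_)
    rw [← Finset.sum_add_distrib]
    exact Finset.sum_congr rfl (fun w _ => split_pred b a c s v w)
  have hswapA1 : (∑ v : Fin (m+1), ∑ w : Fin (m+1),
        (if w ≠ 0 ∧ IsoAbove c s w ∧ v ≠ 0 ∧ desc s w v ∧ v ≠ w ∧ IsoBelow a s v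
            ∧ Mid b s v w then 1 else 0))
      = (∑ w : Fin (m+1), ∑ v : Fin (m+1),
        (if w ≠ 0 ∧ IsoAbove c s w ∧ v ≠ 0 ∧ desc s w v ∧ v ≠ w ∧ IsoBelow a s v
            ∧ Mid b s v w then 1 else 0)) := Finset.sum_comm
  have hswapA2 : (∑ v : Fin (m+1), ∑ w : Fin (m+1),
        (if w ≠ 0 ∧ IsoAbove c s w ∧ v ≠ 0 ∧ desc s w v ∧ v ≠ w ∧ IsoBelow b s v
            ∧ Mid a s v w then 1 else 0))
      = (∑ w : Fin (m+1), ∑ v : Fin (m+1),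
        (if w ≠ 0 ∧ IsoAbove c s w ∧ v ≠ 0 ∧ desc s w v ∧ v ≠ w ∧ IsoBelow b s v
            ∧ Mid a s v w then 1 else 0)) := Finset.sum_comm
  have hD : (∑ v : Fin (m+1), ∑ w : Fin (m+1),
        (if v ≠ 0 ∧ w ≠ 0 ∧ ¬ desc s v w ∧ ¬ desc s w v ∧ IsoBelow a s v ∧ IsoBelow b s w
            ∧ Out c s v w then 1 else 0))
      = (∑ v : Fin (m+1), ∑ w : Fin (m+1),
        (if v ≠ 0 ∧ w ≠ 0 ∧ ¬ desc s v w ∧ ¬ desc s w v ∧ IsoBelow b s v ∧ IsoBelow a s w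
            ∧ Out c s v w then 1 else 0)) := by
    have step1 : (∑ v : Fin (m+1), ∑ w : Fin (m+1),
        (if v ≠ 0 ∧ w ≠ 0 ∧ ¬ desc s v w ∧ ¬ desc s w v ∧ IsoBelow a s v ∧ IsoBelow b s w
            ∧ Out c s v w then 1 else 0))
        = (∑ v : Fin (m+1), ∑ w : Fin (m+1),
          (if w ≠ 0 ∧ v ≠ 0 ∧ ¬ desc s w v ∧ ¬ desc s v w ∧ IsoBelow b s w ∧ IsoBelow a s v
              ∧ Out c s w v then 1 else 0)) :=
      Finset.sum_congr rfl (fun v _ =>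
        Finset.sum_congr rfl (fun w _ => dswap_pred a b c s v w))
    rw [step1]
    exact Finset.sum_comm
  rw [hsplit1, hsplit2, hswapA1, hswapA2, hD]
  push_cast
  ring
end

section
/- Let $\n$ be the vector space over $\mathbb{Q}$ with basis $\{a_{i,k} : i \in \{1,2\}, k \geq 1\}$ with bracket determined by: $[a_{i,2k}, a_{j,2l}] = 0$; $[a_{i,2k}, a_{j,2l+1}] = -a_{j,2(k+l)+1}$ if $i = j$ and $= a_{j,2(k+l)+1}$ if $i \neq j$; and $[a_{i,2k+1}, a_{j,2l+1}] = a_{j,2(k+l+1)} - a_{i,2(k+l+1)}$. Then the map $\phi$ with $\phi(a_{1,2k+1}) = e \otimes t^k$, $\phi(a_{2,2k+1}) = f \otimes t^{k+1}$, $\phi(a_{1,2k}) = -h_1 \otimes t^k$, $\phi(a_{2,2k}) = -h_2 \otimes t^k$ is a Lie algebra isomorphism onto $L\mathfrak{gl}_2^+ = \mathbb{Q}e \oplus (\mathfrak{gl}_2 \otimes t\mathbb{Q}[t])$. -/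
set_option maxHeartbeats 1000000


/-- Let `𝔫` have basis `{a_{i,m} : i ∈ {1,2}, m ≥ 1}` with the bracket of
the two-colored alternating-ladder Lie algebra.  The map `φ` with
`φ(a_{1,2k+1}) = e ⊗ t^k`, `φ(a_{2,2k+1}) = f ⊗ t^{k+1}`, `φ(a_{1,2k}) = -h₁ ⊗ t^k`,
`φ(a_{2,2k}) = -h₂ ⊗ t^k` is a Lie algebra isomorphism onto
`L𝔤𝔩₂⁺ = ℚe ⊕ (𝔤𝔩₂ ⊗ tℚ[t])`, realised inside the `2 × 2` matrices over `ℚ[t]` as the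
matrices whose `(0,0)`, `(1,1)` and `(1,0)` entries have zero constant term:
`φ` (the linear extension of `M`) is injective, its range is exactly `L𝔤𝔩₂⁺`, and the
commutators of the images realise exactly the stated bracket relations. -/
theorem stmt11 (M : Fin 2 → ℕ → Matrix (Fin 2) (Fin 2) (Polynomial ℚ))
    (hM : ∀ (i : Fin 2) (m : ℕ),
      M i m =
        if m % 2 = 1 then
          (if i = 0 then Matrix.single 0 1 (Polynomial.X ^ (m / 2))
           else Matrix.single 1 0 (Polynomial.X ^ (m / 2 + 1)))
        else
          (if i = 0 then -(Matrix.single 0 0 (Polynomial.X ^ (m / 2)))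
           else -(Matrix.single 1 1 (Polynomial.X ^ (m / 2))))) :
    -- φ is injective (the images of the basis vectors are linearly independent)
    Function.Injective (Finsupp.linearCombination ℚ
      (fun p : {p : Fin 2 × ℕ // 1 ≤ p.2} => M p.1.1 p.1.2)) ∧
    -- the image is exactly L𝔤𝔩₂⁺
    Set.range (Finsupp.linearCombination ℚ
      (fun p : {p : Fin 2 × ℕ // 1 ≤ p.2} => M p.1.1 p.1.2))
      = {A : Matrix (Fin 2) (Fin 2) (Polynomial ℚ) |
          (A 0 0).coeff 0 = 0 ∧ (A 1 1).coeff 0 = 0 ∧ (A 1 0).coeff 0 = 0} ∧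
    -- φ intertwines the bracket of 𝔫 with the commutator:
    (∀ (i j : Fin 2) (k l : ℕ), 1 ≤ k → 1 ≤ l →
      M i (2*k) * M j (2*l) - M j (2*l) * M i (2*k) = 0) ∧
    (∀ (i j : Fin 2) (k l : ℕ), 1 ≤ k →
      M i (2*k) * M j (2*l+1) - M j (2*l+1) * M i (2*k) =
        if i = j then -(M j (2*(k+l)+1)) else M j (2*(k+l)+1)) ∧
    (∀ (i j : Fin 2) (k l : ℕ),
      M i (2*k+1) * M j (2*l+1) - M j (2*l+1) * M i (2*k+1) =
        M j (2*(k+l+1)) - M i (2*(k+l+1))) := by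
  open Matrix Polynomial in
  set v := (fun p : {p : Fin 2 × ℕ // 1 ≤ p.2} => M p.1.1 p.1.2) with hv
  have heven : ∀ (i : Fin 2) k, M i (2*k) =
      if i = 0 then -(single (0:Fin 2) (0:Fin 2) ((X:ℚ[X])^k))
      else -(single 1 1 (X^k)) := by
    intro i k
    have h1 : 2*k % 2 = 0 := by omega
    have h2 : 2*k / 2 = k := by omega
    rw [hM, h1, h2]; simp
  have hodd : ∀ (i : Fin 2) k, M i (2*k+1) =
      if i = 0 then single (0:Fin 2) (1:Fin 2) ((X:ℚ[X])^k)
      else single 1 0 (X^(k+1)) := by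
    intro i k
    have h1 : (2*k+1) % 2 = 1 := by omega
    have h2 : (2*k+1) / 2 = k := by omega
    rw [hM, h1, h2]; simp
  have hcoeff : ∀ (j : Fin 2) (n : ℕ) (a b : Fin 2) (d : ℕ), (M j n a b).coeff d =
      if j = 0 ∧ n % 2 = 1 ∧ a = 0 ∧ b = 1 ∧ d = n/2 then 1
      else if j = 1 ∧ n % 2 = 1 ∧ a = 1 ∧ b = 0 ∧ d = n/2 + 1 then 1
      else if j = 0 ∧ n % 2 = 0 ∧ a = 0 ∧ b = 0 ∧ d = n/2 then -1
      else if j = 1 ∧ n % 2 = 0 ∧ a = 1 ∧ b = 1 ∧ d = n/2 then -1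
      else 0 := by
    intro j n a b d
    rw [hM]
    rcases Nat.mod_two_eq_zero_or_one n with h | h <;>
      fin_cases j <;> fin_cases a <;> fin_cases b <;>
        simp [h, Matrix.single, Polynomial.coeff_X_pow, eq_comm] <;>
        split_ifs <;> simp
  have heval : ∀ (x : {p : Fin 2 × ℕ // 1 ≤ p.2} →₀ ℚ) (a b : Fin 2) (d : ℕ),
      (((Finsupp.linearCombination ℚ v) x) a b).coeff d
        = x.sum fun q c => c * ((M q.1.1 q.1.2 a b).coeff d) := by
    intro x a b d
    rw [Finsupp.linearCombination_apply, Finsupp.sum, Finsupp.sum, Matrix.sum_apply,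
      Polynomial.finset_sum_coeff]
    refine Finset.sum_congr rfl fun q _ => ?_
    simp [hv, Polynomial.coeff_smul, smul_eq_mul]
  refine ⟨?_, ?_, ?_, ?_, ?_⟩
  -- injectivity
  · rw [injective_iff_map_eq_zero']
    intro x
    constructor
    · intro hx
      ext p
      obtain ⟨⟨i, m⟩, hm⟩ := p
      have key : ∀ (a b : Fin 2) (d : ℕ) (s : ℚ), s ≠ 0 →
          (∀ q : {p : Fin 2 × ℕ // 1 ≤ p.2},
            ((M q.1.1 q.1.2 a b).coeff d) = if q = ⟨(i, m), hm⟩ then s else 0) →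
          x ⟨(i, m), hm⟩ = 0 := by
        intro a b d s hs hdet
        have h0 : (((Finsupp.linearCombination ℚ v) x) a b).coeff d = 0 := by
          rw [hx]; simp
        rw [heval] at h0
        simp only [hdet, mul_ite, mul_zero] at h0
        rw [Finsupp.sum_ite_eq'] at h0
        by_cases hmem : (⟨(i, m), hm⟩ : {p : Fin 2 × ℕ // 1 ≤ p.2}) ∈ x.support
        · rw [if_pos hmem] at h0
          exact (mul_eq_zero.mp h0).resolve_right hs
        · simpa using hmem
      rcases Nat.mod_two_eq_zero_or_one m with hpar | hpar
      · fin_cases i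
        · refine key 0 0 (m/2) (-1) (by norm_num) fun q => ?_
          rw [hcoeff]
          obtain ⟨⟨j, n⟩, hn⟩ := q
          fin_cases j <;> simp [Subtype.ext_iff, Prod.ext_iff] <;> split_ifs <;>
            first | rfl | omega
        · refine key 1 1 (m/2) (-1) (by norm_num) fun q => ?_
          rw [hcoeff]
          obtain ⟨⟨j, n⟩, hn⟩ := q
          fin_cases j <;> simp [Subtype.ext_iff, Prod.ext_iff] <;> split_ifs <;>
            first | rfl | omega
      · fin_cases i
        · refine key 0 1 (m/2) 1 (by norm_num) fun q => ?_
          rw [hcoeff]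
          obtain ⟨⟨j, n⟩, hn⟩ := q
          fin_cases j <;> simp [Subtype.ext_iff, Prod.ext_iff] <;> split_ifs <;>
            first | rfl | omega
        · refine key 1 0 (m/2 + 1) 1 (by norm_num) fun q => ?_
          rw [hcoeff]
          obtain ⟨⟨j, n⟩, hn⟩ := q
          fin_cases j <;> simp [Subtype.ext_iff, Prod.ext_iff] <;> split_ifs <;>
            first | rfl | omega
    · rintro rfl; simp
  -- range
  · have hzero : ∀ (j : Fin 2) (n : ℕ), 1 ≤ n →
        (M j n 0 0).coeff 0 = 0 ∧ (M j n 1 1).coeff 0 = 0 ∧ (M j n 1 0).coeff 0 = 0 := by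
      intro j n hn
      rcases Nat.mod_two_eq_zero_or_one n with h | h <;> fin_cases j <;>
        refine ⟨?_, ?_, ?_⟩ <;>
          simp [hM, h, Matrix.single, Polynomial.coeff_X_pow] <;> omega
    have hrange : Set.range ⇑(Finsupp.linearCombination ℚ v)
        = ↑(Submodule.span ℚ (Set.range v)) := by
      rw [← LinearMap.coe_range, Finsupp.range_linearCombination]
    have hsplit : ∀ (a b : Fin 2) (p : ℚ[X]), single a b p =
        ∑ d ∈ p.support, (p.coeff d) • single a b ((X:ℚ[X])^d) := by
      intro a b p
      apply Matrix.ext; intro a' b'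
      rw [Matrix.sum_apply]
      by_cases h : a = a' ∧ b = b'
      · obtain ⟨rfl, rfl⟩ := h
        simp only [Matrix.smul_apply, Matrix.single_apply_same,
          Polynomial.smul_X_eq_monomial]
        exact Polynomial.as_sum_support p
      · rw [Matrix.single_apply_of_ne (h := h)]
        symm
        refine Finset.sum_eq_zero fun d _ => ?_
        rw [Matrix.smul_apply, Matrix.single_apply_of_ne (h := h), smul_zero]
    have hmem : ∀ (a b : Fin 2) (d : ℕ), ((a = 0 ∧ b = 1) ∨ 1 ≤ d) →
        single a b ((X:ℚ[X])^d) ∈ Submodule.span ℚ (Set.range v) := by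
      intro a b d hd
      fin_cases a <;> fin_cases b <;> simp only [Fin.mk_zero, Fin.mk_one] at hd ⊢
      · -- (0,0)
        have hd1 : 1 ≤ d := by
          rcases hd with ⟨h1, h2⟩ | h
          · exact absurd h2 (by decide)
          · exact h
        have : single (0:Fin 2) (0:Fin 2) ((X:ℚ[X])^d)
            = -(v ⟨(0, 2*d), by omega⟩) := by
          rw [hv]; simp only [heven]; simp
        rw [this]
        exact Submodule.neg_mem _ (Submodule.subset_span ⟨_, rfl⟩)
      · -- (0,1)
        have : single (0:Fin 2) (1:Fin 2) ((X:ℚ[X])^d)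
            = v ⟨(0, 2*d+1), by omega⟩ := by
          rw [hv]; simp only [hodd]; simp
        rw [this]
        exact Submodule.subset_span ⟨_, rfl⟩
      · -- (1,0)
        have hd1 : 1 ≤ d := by
          rcases hd with ⟨h1, h2⟩ | h
          · exact absurd h1 (by decide)
          · exact h
        have : single (1:Fin 2) (0:Fin 2) ((X:ℚ[X])^d)
            = v ⟨(1, 2*d-1), by omega⟩ := by
          rw [hv]
          have h1 : (2*d-1) % 2 = 1 := by omega
          have h2 : (2*d-1) / 2 + 1 = d := by omega
          simp only [hM, h1, if_pos rfl]
          rw [h2]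
          simp
        rw [this]
        exact Submodule.subset_span ⟨_, rfl⟩
      · -- (1,1)
        have hd1 : 1 ≤ d := by
          rcases hd with ⟨h1, h2⟩ | h
          · exact absurd h1 (by decide)
          · exact h
        have : single (1:Fin 2) (1:Fin 2) ((X:ℚ[X])^d)
            = -(v ⟨(1, 2*d), by omega⟩) := by
          rw [hv]; simp only [heven]; simp
        rw [this]
        exact Submodule.neg_mem _ (Submodule.subset_span ⟨_, rfl⟩)
    apply Set.eq_of_subset_of_subset
    · rintro A ⟨x, rfl⟩
      refine ⟨?_, ?_, ?_⟩ <;>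
        · rw [heval, Finsupp.sum]
          refine Finset.sum_eq_zero fun q _ => ?_
          obtain ⟨h1, h2, h3⟩ := hzero q.1.1 q.1.2 q.2
          first
            | (rw [h1]; ring) | (rw [h2]; ring) | (rw [h3]; ring)
    · intro A hA
      obtain ⟨h00, h11, h10⟩ := hA
      rw [hrange]
      show A ∈ Submodule.span ℚ (Set.range v)
      rw [Matrix.matrix_eq_sum_single A]
      refine Submodule.sum_mem _ fun a _ => Submodule.sum_mem _ fun b _ => ?_
      rw [hsplit]
      refine Submodule.sum_mem _ fun d hd => Submodule.smul_mem _ _ (hmem a b d ?_)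
      rw [Polynomial.mem_support_iff] at hd
      fin_cases a <;> fin_cases b <;> simp only [Fin.mk_zero, Fin.mk_one] at hd ⊢
      · right
        rcases Nat.eq_zero_or_pos d with rfl | h
        · exact absurd h00 hd
        · exact h
      · exact Or.inl (by simp)
      · right
        rcases Nat.eq_zero_or_pos d with rfl | h
        · exact absurd h10 hd
        · exact h
      · right
        rcases Nat.eq_zero_or_pos d with rfl | h
        · exact absurd h11 hd
        · exact h
  -- bracket relations
  · clear hcoeff heval hv
    intro i j k l _ _
    simp only [heven]
    fin_cases i <;> fin_cases j <;>
      · simp only [Fin.mk_zero, Fin.mk_one, Fin.isValue, reduceIte, one_ne_zero]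
        apply Matrix.ext
        intro a b
        fin_cases a <;> fin_cases b <;>
          · simp [Matrix.mul_apply, Matrix.single, Fin.sum_univ_two]
            try ring
  · clear hcoeff heval hv
    intro i j k l _
    simp only [heven, hodd]
    fin_cases i <;> fin_cases j <;>
      · simp only [Fin.mk_zero, Fin.mk_one, Fin.isValue, reduceIte, one_ne_zero]
        apply Matrix.ext
        intro a b
        fin_cases a <;> fin_cases b <;>
          · simp [Matrix.mul_apply, Matrix.single, Fin.sum_univ_two]
            try ring
  · clear hcoeff heval hv
    intro i j k l
    simp only [heven, hodd]
    fin_cases i <;> fin_cases j <;>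
      · simp only [Fin.mk_zero, Fin.mk_one, Fin.isValue, reduceIte, one_ne_zero]
        apply Matrix.ext
        intro a b
        fin_cases a <;> fin_cases b <;>
          · simp [Matrix.mul_apply, Matrix.single, Fin.sum_univ_two]
            try ring
end
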